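/- Let P, Q ∈ GL⁺(H) be such that P, Q and the frame operator S_Λ pairwise commute. Then (Λ_w)_{w∈Ω} is a (P, Q)-controlled continuous g-frame with bounds A and B if and only if (Λ_w)_{w∈Ω} is a ((PQ)^{1/2}, (PQ)^{1/2})-controlled continuous g-frame with the same bounds A and B, i.e. A‖f‖² ≤ ∫_Ω ‖Λ_w (PQ)^{1/2} f‖² dμ(w) ≤ B‖f‖² for every f ∈ H. -/

import Mathlib

open MeasureTheory
open scoped ComplexInnerProductSpace NNReal

set_option maxHeartbeats 1000000 in
set_option synthInstance.maxHeartbeats 400000 in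
/-- If `a` is self-adjoint and commutes with `c`, then `cfc f a` commutes with `c`. -/
lemma commute_cfc' {H : Type*} [NormedAddCommGroup H] [InnerProductSpace ℂ H] [CompleteSpace H]
    (a c : H →L[ℂ] H) (ha : IsSelfAdjoint a) (hac : a * c = c * a)
    (f : ℝ → ℝ) : cfc f a * c = c * cfc f a := by
  by_cases hf : ContinuousOn f (spectrum ℝ a)
  · rw [cfc_apply f a ha hf]
    set φ := cfcHom (R := ℝ) ha with hφ
    let S : Subalgebra ℝ C(spectrum ℝ a, ℝ) :=
      Subalgebra.comap (φ : C(spectrum ℝ a, ℝ) →⋆ₐ[ℝ] (H →L[ℂ] H)).toAlgHom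
        (Subalgebra.centralizer ℝ {c})
    have hSmem : ∀ g, g ∈ S ↔ c * φ g = φ g * c := by
      intro g
      simp [S, Subalgebra.mem_comap, Subalgebra.mem_centralizer_iff]
    have hclosed : IsClosed (S : Set C(spectrum ℝ a, ℝ)) := by
      have : (S : Set C(spectrum ℝ a, ℝ)) = φ ⁻¹' {x | c * x = x * c} := by
        ext g; simp [hSmem g]
      rw [this]
      exact ((isClosed_eq (continuous_const.mul continuous_id)
        (continuous_id.mul continuous_const))).preimage
        (cfcHom_isClosedEmbedding (R := ℝ) ha).continuous
    have hX : polynomialFunctions (spectrum ℝ a) ≤ S := by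
      rw [polynomialFunctions.eq_adjoin_X]
      apply Algebra.adjoin_le
      rintro g ⟨rfl⟩
      rw [SetLike.mem_coe, hSmem]
      have : (Polynomial.toContinuousMapOnAlgHom (spectrum ℝ a)) Polynomial.X
          = (ContinuousMap.id ℝ).restrict (spectrum ℝ a) := by
        ext x; simp
      rw [this, cfcHom_id (R := ℝ) ha, hac]
    have htop : (⊤ : Subalgebra ℝ C(spectrum ℝ a, ℝ)) ≤ S := by
      rw [← polynomialFunctions.topologicalClosure (spectrum ℝ a)]
      exact Subalgebra.topologicalClosure_minimal hX hclosed
    exact ((hSmem ⟨_, hf.restrict⟩).mp (htop Algebra.mem_top)).symm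
  · rw [cfc_apply_of_not_continuousOn a hf]
    simp

set_option maxHeartbeats 1000000 in
set_option synthInstance.maxHeartbeats 400000 in
/-- The positive square root of `P * Q` commutes with anything commuting with `P` and `Q`. -/
lemma sqrt_commute {H : Type*} [NormedAddCommGroup H] [InnerProductSpace ℂ H] [CompleteSpace H]
    (P Q R SΛ : H →L[ℂ] H) (hR : R.IsPositive) (hRsq : R * R = P * Q)
    (hPS : P * SΛ = SΛ * P) (hQS : Q * SΛ = SΛ * Q) : R * SΛ = SΛ * R := by
  have hR0 : (0 : H →L[ℂ] H) ≤ R := (ContinuousLinearMap.nonneg_iff_isPositive R).mpr hR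
  have hPQ0 : (0 : H →L[ℂ] H) ≤ P * Q := by
    have := star_mul_self_nonneg R
    rwa [hR.isSelfAdjoint.star_eq, hRsq] at this
  have hPQsa : IsSelfAdjoint (P * Q) := .of_nonneg hPQ0
  have hPQS : (P * Q) * SΛ = SΛ * (P * Q) := by
    rw [mul_assoc, hQS, ← mul_assoc, hPS, mul_assoc]
  set g : ℝ → ℝ := fun x => (NNReal.sqrt x.toNNReal : ℝ) with hg
  have hgc : Continuous g :=
    NNReal.continuous_coe.comp (NNReal.continuous_sqrt.comp continuous_real_toNNReal)
  have hsqrt : CFC.sqrt (P * Q) = cfc g (P * Q) := by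
    rw [CFC.sqrt, cfcₙ_nnreal_eq_real NNReal.sqrt (P * Q) hPQ0,
      cfcₙ_eq_cfc hgc.continuousOn (by simp [hg])]
  have hReq : R = cfc g (P * Q) := by
    rw [← hsqrt]; exact (CFC.sqrt_unique hRsq hR0).symm
  rw [hReq]
  exact commute_cfc' (P * Q) SΛ hPQsa hPQS g

set_option maxHeartbeats 1000000 in
set_option synthInstance.maxHeartbeats 400000 in
/-- `(Λ_w)` is a `(P, Q)`-controlled continuous g-frame with bounds `A, B`
iff it is a `((PQ)^{1/2}, (PQ)^{1/2})`-controlled continuous g-frame with the same bounds. -/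
theorem controlled_iff_sqrt_controlled
    {H L Ω : Type*}
    [NormedAddCommGroup H] [InnerProductSpace ℂ H] [CompleteSpace H]
    [NormedAddCommGroup L] [InnerProductSpace ℂ L] [CompleteSpace L]
    [MeasurableSpace Ω] (μ : Measure Ω)
    (Λ : Ω → H →L[ℂ] L)
    (hmeas : ∀ f : H, AEStronglyMeasurable (fun w => Λ w f) μ)
    (hint : ∀ f : H, Integrable (fun w => ‖Λ w f‖ ^ 2) μ)
    -- (Λ_w) is a continuous g-Bessel family
    (B₀ : ℝ) (hB₀ : 0 < B₀)
    (hBessel : ∀ f : H, ∫ w, ‖Λ w f‖ ^ 2 ∂μ ≤ B₀ * ‖f‖ ^ 2)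
    -- P, Q ∈ GL⁺(H)
    (P Q Pinv Qinv : H →L[ℂ] H)
    (hP : P.IsPositive) (hPinv : P * Pinv = 1 ∧ Pinv * P = 1)
    (hQ : Q.IsPositive) (hQinv : Q * Qinv = 1 ∧ Qinv * Q = 1)
    -- the frame operator S_Λ
    (SΛ : H →L[ℂ] H)
    (hSΛ : ∀ f g : H, ⟪SΛ f, g⟫ = ∫ w, ⟪Λ w f, Λ w g⟫ ∂μ)
    -- P, Q, S_Λ pairwise commute
    (hPQ : P * Q = Q * P) (hPS : P * SΛ = SΛ * P) (hQS : Q * SΛ = SΛ * Q)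
    -- R = (PQ)^{1/2}, the positive square root of PQ
    (R : H →L[ℂ] H) (hR : R.IsPositive) (hRsq : R * R = P * Q)
    (A B : ℝ) (hA : 0 < A) (hAB : A ≤ B) :
    (∀ f : H,
      A * ‖f‖ ^ 2 ≤ (∫ w, ⟪Λ w (P f), Λ w (Q f)⟫ ∂μ).re ∧
      (∫ w, ⟪Λ w (P f), Λ w (Q f)⟫ ∂μ).re ≤ B * ‖f‖ ^ 2) ↔
    (∀ f : H,
      A * ‖f‖ ^ 2 ≤ ∫ w, ‖Λ w (R f)‖ ^ 2 ∂μ ∧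
      ∫ w, ‖Λ w (R f)‖ ^ 2 ∂μ ≤ B * ‖f‖ ^ 2) := by
  have hRS : R * SΛ = SΛ * R := sqrt_commute P Q R SΛ hR hRsq hPS hQS
  have key : ∀ f : H,
      (∫ w, ⟪Λ w (P f), Λ w (Q f)⟫ ∂μ).re = ∫ w, ‖Λ w (R f)‖ ^ 2 ∂μ := by
    intro f
    have h1 : (∫ w, ⟪Λ w (P f), Λ w (Q f)⟫ ∂μ) = ⟪SΛ (P (Q f)), f⟫ := by
      rw [← hSΛ]
      calc ⟪SΛ (P f), Q f⟫ = ⟪Q (SΛ (P f)), f⟫ := (hQ.1 _ _).symm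
      _ = ⟪SΛ (P (Q f)), f⟫ := by
          congr 1
          have : Q * SΛ * P = SΛ * (P * Q) := by rw [hQS, mul_assoc, ← hPQ]
          calc Q (SΛ (P f)) = (Q * SΛ * P) f := rfl
          _ = (SΛ * (P * Q)) f := by rw [this]
          _ = SΛ (P (Q f)) := rfl
    have h2 : ((∫ w, ‖Λ w (R f)‖ ^ 2 ∂μ : ℝ) : ℂ) = ⟪SΛ (R f), R f⟫ := by
      rw [hSΛ]
      simp only [inner_self_eq_norm_sq_to_K, ← RCLike.ofReal_pow]
      exact (integral_ofReal (𝕜 := ℂ)).symm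
    have h3 : ⟪SΛ (R f), R f⟫ = ⟪SΛ (P (Q f)), f⟫ := by
      calc ⟪SΛ (R f), R f⟫ = ⟪R (SΛ (R f)), f⟫ := (hR.1 _ _).symm
      _ = ⟪SΛ (P (Q f)), f⟫ := by
          congr 1
          have : R * SΛ * R = SΛ * (P * Q) := by rw [hRS, mul_assoc, hRsq]
          calc R (SΛ (R f)) = (R * SΛ * R) f := rfl
          _ = (SΛ * (P * Q)) f := by rw [this]
          _ = SΛ (P (Q f)) := rfl
    rw [h1, ← h3, ← h2, Complex.ofReal_re]
  constructor
  · intro h f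
    rw [← key f]
    exact h f
  · intro h f
    rw [key f]
    exact h f
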